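/- Let C be an idempotent complete triangulated category with a weight structure w. If M is without weights m,...,n (m ≤ n), then M is itself an extension of an element of C_{w≥n+1} by an element of C_{w≤m-1}: there exists a distinguished triangle L → M → R → L[1] with L ∈ C_{w≤m-1} and R ∈ C_{w≥n+1}. -/

import Mathlib

open CategoryTheory CategoryTheory.Limits CategoryTheory.Pretriangulated Opposite

universe v u

variable (C : Type u) [Category.{v} C] [Preadditive C] [HasZeroObject C]
  [HasShift C ℤ] [∀ n : ℤ, (shiftFunctor C n).Additive] [Pretriangulated C]

/-- A weight structure on the triangulated category `C`. -/
structure WeightStructure where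
  /-- the class `C_{w ≤ n}` -/
  le : ℤ → Set C
  /-- the class `C_{w ≥ n}` -/
  ge : ℤ → Set C
  le_iso_closed : ∀ (n : ℤ) (X Y : C), (X ≅ Y) → X ∈ le n → Y ∈ le n
  ge_iso_closed : ∀ (n : ℤ) (X Y : C), (X ≅ Y) → X ∈ ge n → Y ∈ ge n
  le_retract : ∀ (n : ℤ) (X Y : C) (a : X ⟶ Y) (b : Y ⟶ X),
    a ≫ b = 𝟙 X → Y ∈ le n → X ∈ le n
  ge_retract : ∀ (n : ℤ) (X Y : C) (a : X ⟶ Y) (b : Y ⟶ X),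
    a ≫ b = 𝟙 X → Y ∈ ge n → X ∈ ge n
  le_shift : ∀ (n k : ℤ) (X : C), X ∈ le n → X⟦k⟧ ∈ le (n + k)
  ge_shift : ∀ (n k : ℤ) (X : C), X ∈ ge n → X⟦k⟧ ∈ ge (n + k)
  le_mono : ∀ n : ℤ, le n ⊆ le (n + 1)
  ge_anti : ∀ n : ℤ, ge (n + 1) ⊆ ge n
  orth : ∀ (n : ℤ) (X Y : C), X ∈ le n → Y ∈ ge (n + 1) → ∀ f : X ⟶ Y, f = 0
  decomp : ∀ (X : C) (k : ℤ), ∃ (A B : C) (x : A ⟶ X) (y : X ⟶ B) (δ : B ⟶ A⟦(1 : ℤ)⟧),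
    (Triangle.mk x y δ ∈ distTriang C) ∧ A ∈ le k ∧ B ∈ ge (k + 1)

variable {C}

/-- `(A, B, x, y)` is a `k`-weight decomposition of `X`. -/
def WeightStructure.IsWeightDecomp (w : WeightStructure C) (k : ℤ) {X : C} (A B : C)
    (x : A ⟶ X) (y : X ⟶ B) : Prop :=
  (∃ δ : B ⟶ A⟦(1 : ℤ)⟧, Triangle.mk x y δ ∈ distTriang C) ∧ A ∈ w.le k ∧ B ∈ w.ge (k + 1)

/-- `g : M ⟶ N` kills weights `m, …, n`. -/
def WeightStructure.KillsWeights (w : WeightStructure C) (m n : ℤ) {M N : C}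
    (g : M ⟶ N) : Prop :=
  ∃ (A A' B B' : C) (x : A ⟶ M) (x' : M ⟶ A') (y' : B ⟶ N) (y : N ⟶ B'),
    w.IsWeightDecomp n A A' x x' ∧ w.IsWeightDecomp (m - 1) B B' y' y ∧
      x ≫ g ≫ y = 0

/-- The class of objects of `C` without weights `m, …, n`. -/
def WeightStructure.without (w : WeightStructure C) (m n : ℤ) : Set C :=
  {M : C | w.KillsWeights m n (𝟙 M)}



lemma WeightStructure.le_mono' (w : WeightStructure C) {k l : ℤ} (h : k ≤ l) :
    w.le k ⊆ w.le l :=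
  Int.le_induction (motive := fun l _ => w.le k ⊆ w.le l) subset_rfl
    (fun l _ ih => ih.trans (w.le_mono l)) l h

lemma WeightStructure.ge_anti' (w : WeightStructure C) {k l : ℤ} (h : k ≤ l) :
    w.ge l ⊆ w.ge k :=
  Int.le_induction (motive := fun l _ => w.ge l ⊆ w.ge k) subset_rfl
    (fun l _ ih => (w.ge_anti l).trans ih) l h

/-- Membership in `ge (n+1)` follows from orthogonality to `le n`. -/
lemma WeightStructure.mem_ge_of_orth (w : WeightStructure C) (n : ℤ) (R : C)
    (h : ∀ (T : C), T ∈ w.le n → ∀ φ : T ⟶ R, φ = 0) : R ∈ w.ge (n + 1) := by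
  obtain ⟨A₀, B₀, x₀, y₀, δ₀, htri, hA₀, hB₀⟩ := w.decomp R n
  obtain ⟨q, hq⟩ := Triangle.yoneda_exact₂ _ htri (𝟙 R) ((Category.comp_id x₀).trans (h A₀ hA₀ x₀))
  exact w.ge_retract (n + 1) R B₀ y₀ q hq.symm hB₀

/-- In an idempotent complete triangulated category, an object without weights
`m, …, n` is an extension of an element of `C_{w ≥ n+1}` by an element of
`C_{w ≤ m-1}`. -/
theorem stmt6 [IsIdempotentComplete C] (w : WeightStructure C) (m n : ℤ)
    (hmn : m ≤ n) (M : C) (hM : M ∈ w.without m n) :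
    ∃ (L R : C) (f : L ⟶ M) (g : M ⟶ R) (δ : R ⟶ L⟦(1 : ℤ)⟧),
      (Triangle.mk f g δ ∈ distTriang C) ∧ L ∈ w.le (m - 1) ∧
        R ∈ w.ge (n + 1) := by
  obtain ⟨A, A', B, B', x, x', y', y, hdecA, hdecB, hxy⟩ := hM
  obtain ⟨⟨δA, hTA⟩, hAle, hA'ge⟩ := hdecA
  obtain ⟨⟨δB, hTB⟩, hBle, hB'ge⟩ := hdecB
  rw [Category.id_comp] at hxy
  -- basic membership facts
  have hBlen : B ∈ w.le n := w.le_mono' (by omega) hBle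
  have hA'gem : A'⟦(-1 : ℤ)⟧ ∈ w.ge (m - 1 + 1) := by
    have h1 := w.ge_shift (n + 1) (-1) A' hA'ge
    have h2 : n + 1 + (-1) = n := by omega
    rw [h2] at h1
    exact w.ge_anti' (by omega) h1
  -- lift `x` through `y'`
  obtain ⟨a, ha⟩ : ∃ a : A ⟶ B, x = a ≫ y' :=
    Triangle.coyoneda_exact₂ _ hTB x hxy
  -- `y' ≫ x' = 0`, lift `y'` through `x`
  have hy'x' : y' ≫ x' = 0 := w.orth n B A' hBlen hA'ge _
  obtain ⟨b, hb⟩ : ∃ b : B ⟶ A, y' = b ≫ x :=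
    Triangle.coyoneda_exact₂ _ hTA y' hy'x'
  -- `b ≫ a` is idempotent
  have habx : (a ≫ b - 𝟙 A) ≫ x = 0 := by
    simp only [Preadditive.sub_comp, Category.id_comp, Category.assoc, ← hb, ← ha, sub_self]
  obtain ⟨u, hu⟩ := Triangle.coyoneda_exact₂ _ (inv_rot_of_distTriang _ hTA)
    (a ≫ b - 𝟙 A) habx
  have hbu : b ≫ u = 0 := w.orth (m - 1) B _ hBle hA'gem _
  have hbab : b ≫ (a ≫ b) = b := by
    have h3 : b ≫ (a ≫ b - 𝟙 A) = 0 := by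
      rw [hu]; exact (Category.assoc b u _).symm.trans ((congrArg (· ≫ _) hbu).trans zero_comp)
    rw [Preadditive.comp_sub, Category.comp_id, sub_eq_zero] at h3
    exact h3
  have hidem : (b ≫ a) ≫ (b ≫ a) = b ≫ a := by
    have h4 : (b ≫ (a ≫ b)) ≫ a = b ≫ a := by rw [hbab]
    calc (b ≫ a) ≫ (b ≫ a) = (b ≫ (a ≫ b)) ≫ a := by simp only [Category.assoc]
      _ = b ≫ a := h4
  -- split the idempotent
  obtain ⟨L, i, e, hie, hei⟩ := IsIdempotentComplete.idempotents_split B (b ≫ a) hidem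
  have hLle : L ∈ w.le (m - 1) := w.le_retract (m - 1) L B i e hie hBle
  -- the triangle on `f = i ≫ y'`
  obtain ⟨R, g, δ, hT⟩ := distinguished_cocone_triangle (i ≫ y')
  refine ⟨L, R, i ≫ y', g, δ, hT, hLle, ?_⟩
  -- key identity: `y' = e ≫ (i ≫ y')`
  have hy'f : y' = e ≫ (i ≫ y') := by
    calc y' = b ≫ x := hb
      _ = b ≫ (a ≫ y') := by rw [← ha]
      _ = (b ≫ a) ≫ y' := by rw [Category.assoc]
      _ = (e ≫ i) ≫ y' := by rw [hei]
      _ = e ≫ (i ≫ y') := by rw [Category.assoc]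
  have hsplit : (i ≫ b) ≫ (a ≫ e) = 𝟙 L := by
    calc (i ≫ b) ≫ (a ≫ e) = i ≫ (b ≫ a) ≫ e := by simp only [Category.assoc]
      _ = i ≫ (e ≫ i) ≫ e := by rw [hei]
      _ = (i ≫ e) ≫ (i ≫ e) := by simp only [Category.assoc]
      _ = 𝟙 L := by rw [hie, Category.id_comp]
  have h12 : (i ≫ y') ≫ g = 0 := comp_distTriang_mor_zero₁₂ _ hT
  have hxg : x ≫ g = 0 := by
    calc x ≫ g = (a ≫ (e ≫ (i ≫ y'))) ≫ g := by rw [← hy'f, ← ha]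
      _ = (a ≫ e) ≫ ((i ≫ y') ≫ g) := by simp only [Category.assoc]
      _ = 0 := by rw [h12, comp_zero]
  -- show Hom(T, R) = 0 for all T ∈ le n
  refine w.mem_ge_of_orth n R (fun T hTle φ => ?_)
  -- first: `φ ≫ δ = 0`
  have h31 : δ ≫ (i ≫ y')⟦(1 : ℤ)⟧' = 0 := comp_distTriang_mor_zero₃₁ _ hT
  have hχf : (φ ≫ δ) ≫ (i ≫ y')⟦(1 : ℤ)⟧' = 0 := by
    rw [Category.assoc, h31, comp_zero]
  have hψx : ((φ ≫ δ) ≫ (i ≫ b)⟦(1 : ℤ)⟧') ≫ x⟦(1 : ℤ)⟧' = 0 := by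
    have h5 : (i ≫ b) ≫ x = i ≫ y' := by rw [Category.assoc, ← hb]
    rw [Category.assoc, ← CategoryTheory.Functor.map_comp, h5]
    exact hχf
  obtain ⟨ρ, hρ⟩ := Triangle.coyoneda_exact₁ _ hTA ((φ ≫ δ) ≫ (i ≫ b)⟦(1 : ℤ)⟧') hψx
  have hρ0 : ρ = 0 := w.orth n T A' hTle hA'ge ρ
  have hψ0 : (φ ≫ δ) ≫ (i ≫ b)⟦(1 : ℤ)⟧' = 0 := by rw [hρ0] at hρ; exact hρ.trans zero_comp
  have hφδ : φ ≫ δ = 0 := by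
    have hid : (𝟙 L)⟦(1 : ℤ)⟧' = (i ≫ b)⟦(1 : ℤ)⟧' ≫ (a ≫ e)⟦(1 : ℤ)⟧' := by
      rw [← CategoryTheory.Functor.map_comp, hsplit]
    calc φ ≫ δ = (φ ≫ δ) ≫ (𝟙 L)⟦(1 : ℤ)⟧' := by
          rw [CategoryTheory.Functor.map_id, Category.comp_id]
      _ = ((φ ≫ δ) ≫ (i ≫ b)⟦(1 : ℤ)⟧') ≫ (a ≫ e)⟦(1 : ℤ)⟧' := by
          rw [hid]; simp only [Category.assoc]
      _ = 0 := by rw [hψ0, zero_comp]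
  -- lift `φ` through `g`, then through `x`, and conclude
  obtain ⟨τ, hτ⟩ := Triangle.coyoneda_exact₃ _ hT φ hφδ
  have hτx' : τ ≫ x' = 0 := w.orth n T A' hTle hA'ge _
  obtain ⟨σ, hσ⟩ := Triangle.coyoneda_exact₂ _ hTA τ hτx'
  calc φ = (σ ≫ x) ≫ g := by rw [hτ, hσ]; rfl
    _ = σ ≫ (x ≫ g) := Category.assoc _ _ _
    _ = 0 := (congrArg (σ ≫ ·) hxg).trans comp_zero
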